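/- Optimal pilot reuse factor in the asymptotic regime: the function R(ζ) = (1 − ζ·K/τ_c)·log₂(1 + ζ/μ₂), defined for 0 < ζ < τ_c/K, has a stationary point at ζ* = μ₂·(ν/W(ν·e) − 1), where ν = 1 + τ_c/(μ₂·K) and W is the Lambert W function (principal branch), i.e., R'(ζ*) = 0. -/

import Mathlib

/-- Optimal pilot reuse factor in the asymptotic regime: the asymptotic rate
`R(ζ) = (1 - ζK/τ_c) · log₂(1 + ζ/μ₂)` has a stationary point at
`ζ* = μ₂·(ν/W(νe) - 1)`, where `ν = 1 + τ_c/(μ₂K)` and `W(νe)` is the value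
`w` of the principal branch of the Lambert W function at `ν·e`, i.e.
characterized by `w·e^w = ν·e` and `w ≥ -1`. -/
theorem optimal_pilot_reuse_stationary (K τc μ₂ : ℝ)
    (hK : 0 < K) (hτc : 0 < τc) (hμ₂ : 0 < μ₂)
    (ν : ℝ) (hν : ν = 1 + τc / (μ₂ * K))
    (w : ℝ) (hw : w * Real.exp w = ν * Real.exp 1) (hw1 : -1 ≤ w)
    (ζstar : ℝ) (hζstar : ζstar = μ₂ * (ν / w - 1)) :
    HasDerivAt (fun ζ : ℝ => (1 - ζ * K / τc) * Real.logb 2 (1 + ζ / μ₂))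
      0 ζstar := by
  have hν1 : 1 < ν := by
    rw [hν]
    have : 0 < τc / (μ₂ * K) := div_pos hτc (mul_pos hμ₂ hK)
    linarith
  have hνpos : 0 < ν := by linarith
  have hw0 : 0 < w := by
    nlinarith [Real.exp_pos w, Real.exp_pos 1, mul_pos hνpos (Real.exp_pos 1)]
  have hτ : τc = μ₂ * K * (ν - 1) := by
    field_simp at hν
    linarith [hν]
  have hx : 1 + ζstar / μ₂ = ν / w := by
    rw [hζstar]
    field_simp
    ring
  have hxpos : 0 < 1 + ζstar / μ₂ := by
    rw [hx]; exact div_pos hνpos hw0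
  have hxne : (1 : ℝ) + ζstar / μ₂ ≠ 0 := ne_of_gt hxpos
  -- key log identity: log w + w = log ν + 1
  have hlog : Real.log w + w = Real.log ν + 1 := by
    have := congrArg Real.log hw
    rwa [Real.log_mul (ne_of_gt hw0) (Real.exp_ne_zero w),
      Real.log_mul (ne_of_gt hνpos) (Real.exp_ne_zero 1),
      Real.log_exp, Real.log_exp] at this
  have hlogx : Real.log (1 + ζstar / μ₂) = w - 1 := by
    rw [hx, Real.log_div (ne_of_gt hνpos) (ne_of_gt hw0)]
    linarith
  -- derivative pieces
  have h1 : HasDerivAt (fun ζ : ℝ => 1 - ζ * K / τc) (-(K / τc)) ζstar := by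
    have h := (((hasDerivAt_id ζstar).mul_const K).div_const τc)
    have := (hasDerivAt_const ζstar (1 : ℝ)).sub h
    simpa [Pi.sub_def] using this
  have h2 : HasDerivAt (fun ζ : ℝ => 1 + ζ / μ₂) (1 / μ₂) ζstar := by
    have h := (hasDerivAt_id ζstar).div_const μ₂
    have := (hasDerivAt_const ζstar (1 : ℝ)).add h
    simpa [Pi.add_def] using this
  have h3 : HasDerivAt (fun ζ : ℝ => Real.log (1 + ζ / μ₂))
      (1 / μ₂ / (1 + ζstar / μ₂)) ζstar := h2.log hxne
  have h4 : HasDerivAt (fun ζ : ℝ => Real.logb 2 (1 + ζ / μ₂))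
      (1 / μ₂ / (1 + ζstar / μ₂) / Real.log 2) ζstar := by
    simp only [Real.logb]
    exact h3.div_const _
  have h5 : HasDerivAt (fun ζ : ℝ => (1 - ζ * K / τc) * Real.logb 2 (1 + ζ / μ₂)) _ ζstar :=
    h1.mul h4
  convert h5 using 1
  rw [← Real.log_div_log, hlogx, hx, hζstar, hτ]
  have hl2 : Real.log 2 ≠ 0 := ne_of_gt (Real.log_pos (by norm_num))
  have hν1' : ν - 1 ≠ 0 := by linarith
  field_simp
  ring
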